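/- Let μ be a nonnegative finite Borel measure on [-1,1], and set u0 = ∫ 1 dμ, u1 = ∫ x dμ, u2p = ∫ x² · 1_{[0,1]}(x) dμ, u2m = ∫ x² · 1_{[-1,0]}(x) dμ. Then u2p - Real.sqrt (u2m * (u0 - u2p)) ≤ u1. -/

import Mathlib

open MeasureTheory Set

theorem dmm2_lower_bound (μ : Measure ℝ) [IsFiniteMeasure μ]
    (hsupp : μ (Icc (-1 : ℝ) 1)ᶜ = 0)
    (u0 u1 u2p u2m : ℝ)
    (hu0 : u0 = ∫ x, (1 : ℝ) ∂μ)
    (hu1 : u1 = ∫ x, x ∂μ)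
    (hu2p : u2p = ∫ x, x ^ 2 * (Icc (0 : ℝ) 1).indicator 1 x ∂μ)
    (hu2m : u2m = ∫ x, x ^ 2 * (Icc (-1 : ℝ) 0).indicator 1 x ∂μ) :
    u2p - Real.sqrt (u2m * (u0 - u2p)) ≤ u1 := by
  have hae : ∀ᵐ x ∂μ, x ∈ Icc (-1 : ℝ) 1 := ae_iff.2 hsupp
  set f1 : ℝ → ℝ := fun x => x ^ 2 * (Icc (0 : ℝ) 1).indicator 1 x with hf1def
  set f2 : ℝ → ℝ := fun x => x ^ 2 * (Icc (-1 : ℝ) 0).indicator 1 x with hf2def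
  have hm1 : Measurable f1 :=
    (measurable_id.pow_const 2).mul (measurable_one.indicator measurableSet_Icc)
  have hm2 : Measurable f2 :=
    (measurable_id.pow_const 2).mul (measurable_one.indicator measurableSet_Icc)
  have hbd1 : ∀ x, ‖f1 x‖ ≤ 1 := by
    intro x
    simp only [hf1def, Real.norm_eq_abs, indicator_apply, mem_Icc, Pi.one_apply, mul_ite,
      mul_one, mul_zero]
    split_ifs with h
    · rw [abs_of_nonneg (sq_nonneg x)]
      nlinarith [h.1, h.2]
    · simp
  have hbd2 : ∀ x, ‖f2 x‖ ≤ 1 := by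
    intro x
    simp only [hf2def, Real.norm_eq_abs, indicator_apply, mem_Icc, Pi.one_apply, mul_ite,
      mul_one, mul_zero]
    split_ifs with h
    · rw [abs_of_nonneg (sq_nonneg x)]
      nlinarith [h.1, h.2]
    · simp
  have hi1 : Integrable f1 μ :=
    (integrable_const (1 : ℝ)).mono' hm1.aestronglyMeasurable (ae_of_all μ hbd1)
  have hi2 : Integrable f2 μ :=
    (integrable_const (1 : ℝ)).mono' hm2.aestronglyMeasurable (ae_of_all μ hbd2)
  have hix : Integrable (fun x : ℝ => x) μ := by
    refine (integrable_const (1 : ℝ)).mono' measurable_id.aestronglyMeasurable ?_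
    filter_upwards [hae] with x hx
    rw [Real.norm_eq_abs, abs_le]
    exact ⟨hx.1, hx.2⟩
  have hic : Integrable (fun _ : ℝ => (1 : ℝ)) μ := integrable_const 1
  -- nonnegativity facts
  have hP : 0 ≤ u0 - u2p := by
    rw [hu0, hu2p, ← integral_sub hic hi1]
    refine integral_nonneg fun x => ?_
    simp only [hf1def, indicator_apply, mem_Icc, Pi.one_apply, Pi.sub_apply, Pi.zero_apply,
      mul_ite, mul_one, mul_zero]
    split_ifs with h
    · nlinarith [h.1, h.2]
    · simp
  have hm0 : 0 ≤ u2m := by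
    rw [hu2m]
    refine integral_nonneg fun x => ?_
    exact mul_nonneg (sq_nonneg x) (indicator_nonneg (fun _ _ => zero_le_one) x)
  have hmP : u2m ≤ u0 - u2p := by
    rw [hu0, hu2p, hu2m, ← integral_sub hic hi1]
    refine integral_mono hi2 (hic.sub hi1) fun x => ?_
    simp only [hf1def, hf2def, indicator_apply, mem_Icc, Pi.one_apply, Pi.sub_apply,
      Pi.zero_apply, mul_ite, mul_one, mul_zero]
    split_ifs with h1 h2 h3
    · nlinarith [h1.2, h2.1, sq_nonneg x]
    · nlinarith [h1.1, h1.2]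
    · nlinarith [h3.1, h3.2]
    · norm_num
  -- key inequality for every t > 0
  have key : ∀ t : ℝ, 0 < t → u2p - u2m / (2 * t) - t / 2 * (u0 - u2p) ≤ u1 := by
    intro t ht
    have hga : Integrable (fun x => (1 + t / 2) * f1 x - (1 / (2 * t)) * f2 x) μ :=
      (hi1.const_mul _).sub (hi2.const_mul _)
    have hg : Integrable (fun x => (1 + t / 2) * f1 x - (1 / (2 * t)) * f2 x - t / 2) μ :=
      hga.sub (integrable_const _)
    have hle : ∫ x, ((1 + t / 2) * f1 x - (1 / (2 * t)) * f2 x - t / 2) ∂μ ≤ ∫ x, x ∂μ := by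
      refine integral_mono_ae hg hix ?_
      filter_upwards [hae] with x hx
      simp only [hf1def, hf2def, indicator_apply, mem_Icc, Pi.one_apply, mul_ite, mul_one,
        mul_zero]
      split_ifs with h1 h2 h3
      · have hx0 : x = 0 := le_antisymm h2.2 h1.1
        subst hx0
        norm_num
        linarith
      · have e1 : (0:ℝ) ≤ x * (1 - x) := mul_nonneg h1.1 (by linarith [h1.2])
        have e2 : (0:ℝ) ≤ t * ((1 - x) * (1 + x)) :=
          mul_nonneg ht.le (mul_nonneg (by linarith [h1.2]) (by linarith [h1.1]))
        nlinarith [e1, e2]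
      · have h2t : (0:ℝ) < 2 * t := by linarith
        have hq : (0:ℝ) ≤ (x + t) ^ 2 / (2 * t) := div_nonneg (sq_nonneg _) h2t.le
        have e : (x + t) ^ 2 / (2 * t) = 1 / (2 * t) * x ^ 2 + x + t / 2 := by
          field_simp
          ring
        linarith [hq, e.symm.le, e.le]
      · exfalso
        rcases le_or_gt 0 x with hx0 | hx0
        · exact h1 ⟨hx0, hx.2⟩
        · exact h3 ⟨hx.1, hx0.le⟩
    have hval : ∫ x, ((1 + t / 2) * f1 x - (1 / (2 * t)) * f2 x - t / 2) ∂μ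
        = (1 + t / 2) * (∫ x, f1 x ∂μ) - (1 / (2 * t)) * (∫ x, f2 x ∂μ)
          - (μ Set.univ).toReal * (t / 2) := by
      rw [integral_sub hga (integrable_const _),
        integral_sub (hi1.const_mul _) (hi2.const_mul _), integral_const_mul,
        integral_const_mul, integral_const, smul_eq_mul]
      rfl
    have hmeasT : (μ Set.univ).toReal = u0 := by
      rw [hu0]; simp [integral_const]; rfl
    rw [hval, hmeasT, ← hu1, ← hu2p, ← hu2m] at hle
    have heq : u2p - u2m / (2 * t) - t / 2 * (u0 - u2p)
        = (1 + t / 2) * u2p - (1 / (2 * t)) * u2m - u0 * (t / 2) := by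
      field_simp
      ring
    rw [heq]
    exact hle
  rcases eq_or_lt_of_le hm0 with h0 | hpos
  · -- u2m = 0
    rw [← h0, zero_mul, Real.sqrt_zero]
    refine le_of_forall_pos_le_add fun ε hε => ?_
    have ht : 0 < 2 * ε / ((u0 - u2p) + 1) := by positivity
    have k := key _ ht
    rw [← h0] at k
    have h1 : (0:ℝ) / (2 * (2 * ε / ((u0 - u2p) + 1))) = 0 := zero_div _
    have h2 : (2 * ε / ((u0 - u2p) + 1)) / 2 * (u0 - u2p) ≤ ε := by
      rw [div_div, div_mul_eq_mul_div, div_le_iff₀ (by positivity)]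
      nlinarith
    rw [h1] at k
    linarith
  · -- u2m > 0
    have hPpos : 0 < u0 - u2p := lt_of_lt_of_le hpos hmP
    set su := Real.sqrt u2m with hsudef
    set sP := Real.sqrt (u0 - u2p) with hsPdef
    have hsu : su ^ 2 = u2m := Real.sq_sqrt hm0
    have hsP : sP ^ 2 = u0 - u2p := Real.sq_sqrt hP
    have hsu0 : 0 < su := Real.sqrt_pos.2 hpos
    have hsP0 : 0 < sP := Real.sqrt_pos.2 hPpos
    have k := key (su / sP) (div_pos hsu0 hsP0)
    have hs : Real.sqrt (u2m * (u0 - u2p)) = su * sP := Real.sqrt_mul hm0 _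
    rw [hs]
    have e1 : u2m / (2 * (su / sP)) = su * sP / 2 := by
      rw [← hsu]
      field_simp
    have e2 : (su / sP) / 2 * (u0 - u2p) = su * sP / 2 := by
      rw [← hsP]
      field_simp
    rw [e1, e2] at k
    linarith
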